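/- arXiv:2008.02140 — 2 statements merged into one kernel-verified Lean document; each statement's English description precedes it below -/
import Mathlib

section
/- Soundness of flexible coSLD resolution with respect to the regular declarative semantics: for every logic program with coclauses (P,coP), every finite sequence G of finite atoms and all finite sets of equations E, E', if the operational semantics judgment P;coP ⊢ ∅ : ⟨G | E⟩ ⇒ E' is derivable and σ ∈ sol(E'), then σ ∈ Ans(G, E, FlexReg(P,coP)). -/
/- Framework: flexible coinductive logic programming (logic programs with coclauses).
   Terms are possibly infinite trees, modelled as M-types of a polynomial functor. -/

namespace FlexLP

/-- A first-order signature: function symbols and predicate symbols, each with an arity.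
Variables are represented by natural numbers (a countably infinite set). -/
structure Sig where
  Func : Type
  far : Func → ℕ
  Pred : Type
  par : Pred → ℕ

/-- Polynomial functor whose M-type is the type of possibly infinite terms:
nodes are labelled by function symbols (with `far` children) or variables (no children). -/
def TermP (S : Sig) : PFunctor :=
  ⟨S.Func ⊕ ℕ, fun l => Fin (match l with | Sum.inl f => S.far f | Sum.inr _ => 0)⟩

/-- Possibly infinite terms over the signature `S`. -/
def Term (S : Sig) : Type := (TermP S).M

/-- The term consisting of a single variable `x`. -/
def Term.var (S : Sig) (x : ℕ) : Term S :=
  PFunctor.M.mk ⟨Sum.inr x, fun i => i.elim0⟩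

/-- The variable `x` occurs in the term `t`. -/
inductive Term.Occurs (S : Sig) (x : ℕ) : Term S → Prop
  | root (t : Term S) (h : (PFunctor.M.dest t).1 = Sum.inr x) : Term.Occurs S x t
  | child (t : Term S) (i : (TermP S).B (PFunctor.M.dest t).1)
      (h : Term.Occurs S x ((PFunctor.M.dest t).2 i)) : Term.Occurs S x t

/-- The term `t` is finite (syntactic): all its branches are finite. -/
inductive Term.IsFinite (S : Sig) : Term S → Prop
  | mk (t : Term S) (h : ∀ i, Term.IsFinite S ((PFunctor.M.dest t).2 i)) : Term.IsFinite S t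

/-- The term `t` is ground: no variable occurs in it. -/
def Term.Ground (S : Sig) (t : Term S) : Prop := ∀ x, ¬ Term.Occurs S x t

/-- A substitution: a map from a finite set of variables to terms. -/
structure Subst (S : Sig) where
  toFun : ℕ → Option (Term S)
  finDom : {x | (toFun x).isSome}.Finite

/-- Domain of a substitution. -/
def Subst.dom {S : Sig} (σ : Subst S) : Set ℕ := {x | (σ.toFun x).isSome}

/-- A substitution is ground if all its values are ground terms. -/
def Subst.Ground {S : Sig} (σ : Subst S) : Prop :=
  ∀ x t, σ.toFun x = some t → Term.Ground S t

/-- `σ ⊑ θ` : `dom σ ⊆ dom θ` and the two substitutions agree on `dom σ`. -/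
def Subst.le {S : Sig} (σ θ : Subst S) : Prop :=
  ∀ x t, σ.toFun x = some t → θ.toFun x = some t

/-- One step of (simultaneous) substitution application, as a coalgebra.
The boolean flag records whether we are still in the original term (`true`)
or inside a substituted term (`false`). -/
def substStep (S : Sig) (σ : Subst S) : Term S × Bool → (TermP S).Obj (Term S × Bool) :=
  fun p =>
    match PFunctor.M.dest p.1, p.2 with
    | ⟨Sum.inl f, ch⟩, b => ⟨Sum.inl f, fun i => (ch i, b)⟩
    | ⟨Sum.inr x, ch⟩, true =>
        match σ.toFun x with
        | some s =>
            match PFunctor.M.dest s with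
            | ⟨l, ch'⟩ => ⟨l, fun i => (ch' i, false)⟩
        | none => ⟨Sum.inr x, fun i => (ch i, true)⟩
    | ⟨Sum.inr x, ch⟩, false => ⟨Sum.inr x, fun i => (ch i, false)⟩

/-- Application `tσ` of a substitution to a term. -/
def Term.subst {S : Sig} (t : Term S) (σ : Subst S) : Term S :=
  PFunctor.M.corec (substStep S σ) (t, true)

/-- Atoms: a predicate symbol applied to terms (a possibly infinite tree whose
root is labelled by a predicate symbol). -/
structure Atom (S : Sig) where
  pred : S.Pred
  args : Fin (S.par pred) → Term S

/-- The variable `x` occurs in the atom `A`. -/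
def Atom.Occurs {S : Sig} (x : ℕ) (A : Atom S) : Prop := ∃ i, Term.Occurs S x (A.args i)

/-- Ground atoms. The set of all ground atoms is the complete Herbrand base. -/
def Atom.Ground {S : Sig} (A : Atom S) : Prop := ∀ i, Term.Ground S (A.args i)

/-- Finite (syntactic) atoms. -/
def Atom.IsFinite {S : Sig} (A : Atom S) : Prop := ∀ i, Term.IsFinite S (A.args i)

/-- Application of a substitution to an atom. -/
def Atom.subst {S : Sig} (A : Atom S) (σ : Subst S) : Atom S :=
  ⟨A.pred, fun i => Term.subst (A.args i) σ⟩

/-- A (definite) clause `head :- body`, made of finite atoms. -/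
structure Clause (S : Sig) where
  head : Atom S
  body : List (Atom S)
  finHead : head.IsFinite
  finBody : ∀ B ∈ body, B.IsFinite

/-- Variables occurring in a clause. -/
def clauseVars {S : Sig} (C : Clause S) : Set ℕ :=
  {x | Atom.Occurs x C.head ∨ ∃ B ∈ C.body, Atom.Occurs x B}

/-- `Ground P` : the ground instances of clauses of `P`, viewed as inference rules
(pairs premises/conclusion) on the complete Herbrand base. -/
def GroundInst {S : Sig} (P : Set (Clause S)) : Set (Atom S × List (Atom S)) :=
  {r | ∃ C ∈ P, ∃ σ : Subst S, σ.Ground ∧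
        r.1 = C.head.subst σ ∧ r.2 = C.body.map (fun B => B.subst σ) ∧
        r.1.Ground ∧ ∀ B ∈ r.2, B.Ground}

/-- The (one step) inference operator `T_P` associated to a program. -/
def TP {S : Sig} (P : Set (Clause S)) (I : Set (Atom S)) : Set (Atom S) :=
  {A | ∃ r ∈ GroundInst P, r.1 = A ∧ ∀ B ∈ r.2, B ∈ I}

/-- `I` is a model of `P`. -/
def IsModel {S : Sig} (P : Set (Clause S)) (I : Set (Atom S)) : Prop := TP P I ⊆ I

/-- `I` is a comodel of `P`. -/
def IsComodel {S : Sig} (P : Set (Clause S)) (I : Set (Atom S)) : Prop := I ⊆ TP P I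

/-- `Ind P` : the inductive declarative semantics, i.e. the least model of `P`. -/
def Ind {S : Sig} (P : Set (Clause S)) : Set (Atom S) := ⋂₀ {I | IsModel P I}

/-- `FlexCo (P,coP)` : the declarative semantics of a logic program with coclauses,
i.e. the largest comodel of `P` included in `Ind (P ∪ coP)` (union of all such comodels). -/
def FlexCo {S : Sig} (P coP : Set (Clause S)) : Set (Atom S) :=
  ⋃₀ {I | IsComodel P I ∧ I ⊆ Ind (P ∪ coP)}

/-- `FlexReg (P,coP)` : the regular declarative semantics, i.e. the union of all
finite comodels of `P` included in `Ind (P ∪ coP)`. -/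
def FlexReg {S : Sig} (P coP : Set (Clause S)) : Set (Atom S) :=
  ⋃₀ {I | I.Finite ∧ IsComodel P I ∧ I ⊆ Ind (P ∪ coP)}

/-- An equation `s ≐ t` between terms. -/
abbrev Eqn (S : Sig) := Term S × Term S

/-- Variables occurring in a set of equations. -/
def eqnVars {S : Sig} (E : Set (Eqn S)) : Set ℕ :=
  {x | ∃ e ∈ E, Term.Occurs S x e.1 ∨ Term.Occurs S x e.2}

/-- `E` is a finite set of equations between finite (syntactic) terms. -/
def EqnSetFin {S : Sig} (E : Set (Eqn S)) : Prop :=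
  E.Finite ∧ ∀ e ∈ E, Term.IsFinite S e.1 ∧ Term.IsFinite S e.2

/-- `sol E` : the set of solutions of `E`, i.e. ground substitutions defined on all
variables of `E` that unify all the equations in `E`. -/
def sol {S : Sig} (E : Set (Eqn S)) : Set (Subst S) :=
  {σ | σ.Ground ∧ eqnVars E ⊆ σ.dom ∧ ∀ e ∈ E, e.1.subst σ = e.2.subst σ}

/-- `E` is solvable. -/
def Solvable {S : Sig} (E : Set (Eqn S)) : Prop := (sol E).Nonempty

/-- `eqs(A,B)` : the equations between the corresponding arguments of two atoms
with the same predicate symbol. -/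
def atomEqs {S : Sig} (A B : Atom S) : Set (Eqn S) :=
  {e | ∃ (h : A.pred = B.pred) (i : Fin (S.par A.pred)),
        e = (A.args i, B.args (Fin.cast (congrArg S.par h) i))}

/-- Variables occurring in a set of atoms. -/
def atomsVars {S : Sig} (H : Set (Atom S)) : Set ℕ := {x | ∃ A ∈ H, Atom.Occurs x A}

/-- Variables occurring in a sequence of atoms (a goal). -/
def goalVars {S : Sig} (G : List (Atom S)) : Set ℕ := {x | ∃ A ∈ G, Atom.Occurs x A}

/-- `ρ` is a renaming of the variables of clause `C` to fresh variables avoiding `avoid`: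
it maps (injectively) every variable of `C` to a variable not in `avoid`. -/
def FreshRenamingFor {S : Sig} (ρ : Subst S) (C : Clause S) (avoid : Set ℕ) : Prop :=
  (∀ x t, ρ.toFun x = some t → ∃ y, t = Term.var S y ∧ y ∉ avoid) ∧
  clauseVars C ⊆ ρ.dom ∧
  (∀ x y, ρ.toFun x = ρ.toFun y → (ρ.toFun x).isSome → x = y)

/-- The big-step operational semantics judgment `P;coP ⊢ H : ⟨G | E⟩ ⇒ E'` of
flexible coSLD resolution, inductively defined by the rules (empty), (co-hyp), (step). -/
inductive OpSem (S : Sig) :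
    Set (Clause S) → Set (Clause S) → Set (Atom S) → List (Atom S) →
      Set (Eqn S) → Set (Eqn S) → Prop
  | empty (P coP : Set (Clause S)) (H : Set (Atom S)) (E : Set (Eqn S)) :
      OpSem S P coP H [] E E
  | cohyp {P coP : Set (Clause S)} {H : Set (Atom S)} {G1 G2 : List (Atom S)}
      {A B : Atom S} {E1 E2 E3 : Set (Eqn S)} :
      coP ≠ ∅ → B ∈ H → A.pred = B.pred →
      Solvable (E1 ∪ atomEqs A B) →
      OpSem S (P ∪ coP) ∅ ∅ [A] (E1 ∪ atomEqs A B) E2 →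
      OpSem S P coP H (G1 ++ G2) E2 E3 →
      OpSem S P coP H (G1 ++ A :: G2) E1 E3
  | step {P coP : Set (Clause S)} {H : Set (Atom S)} {G1 G2 : List (Atom S)}
      {A : Atom S} {E1 E2 E3 : Set (Eqn S)} (C : Clause S) (ρ : Subst S) :
      C ∈ P →
      FreshRenamingFor ρ C (eqnVars E1 ∪ atomsVars H ∪ goalVars (G1 ++ A :: G2)) →
      A.pred = C.head.pred →
      Solvable (E1 ∪ atomEqs A (C.head.subst ρ)) →
      OpSem S P coP (H ∪ {A}) (C.body.map (fun B => B.subst ρ))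
        (E1 ∪ atomEqs A (C.head.subst ρ)) E2 →
      OpSem S P coP H (G1 ++ G2) E2 E3 →
      OpSem S P coP H (G1 ++ A :: G2) E1 E3

/-- `Ans(G,E,I)` : the set of answers to the goal `⟨G | E⟩` correct in the
interpretation `I`. -/
def Ans {S : Sig} (G : List (Atom S)) (E : Set (Eqn S)) (I : Set (Atom S)) :
    Set (Subst S) :=
  {σ | σ ∈ sol E ∧ goalVars G ⊆ σ.dom ∧ ∀ A ∈ G, A.subst σ ∈ I}

/-- The inductive interpretation of the inference system `Loop(P,coP)`, whose judgments
`H ⊢ A` pair a ground atom with a set of ground atoms (circular hypotheses);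
rules: (hp) `H ⊢ A` if `A ∈ H` and `A ∈ Ind (P ∪ coP)`;
(rule) from `H∪{A} ⊢ B` for every premise `B` of a ground instance of a clause of `P`
with conclusion `A`, infer `H ⊢ A`. -/
inductive LoopInd {S : Sig} (P coP : Set (Clause S)) : Set (Atom S) → Atom S → Prop
  | hp {H : Set (Atom S)} {A : Atom S} :
      A ∈ H → A ∈ Ind (P ∪ coP) → LoopInd P coP H A
  | rule {H : Set (Atom S)} {A : Atom S} (r : Atom S × List (Atom S)) :
      r ∈ GroundInst P → r.1 = A →
      (∀ B ∈ r.2, LoopInd P coP (H ∪ {A}) B) →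
      LoopInd P coP H A


variable {S : Sig}

lemma obj_index {P : PFunctor} {X : Type*} {p : P.Obj X} {l : P.A} {F : P.B l → X}
    (h : p = ⟨l, F⟩) (i : P.B p.1) : ∃ j : P.B l, p.2 i = F j := by
  subst h; exact ⟨i, rfl⟩

lemma occurs_child' {x : ℕ} {t : Term S} {l ch} (he : PFunctor.M.dest t = ⟨l, ch⟩)
    {i : (TermP S).B l} (h : Term.Occurs S x (ch i)) : Term.Occurs S x t := by
  have h2 := Term.Occurs.child (S := S) (x := x) t
  rw [he] at h2
  exact h2 i h

lemma occurs_root' {x : ℕ} {t : Term S} {ch} (he : PFunctor.M.dest t = ⟨Sum.inr x, ch⟩) :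
    Term.Occurs S x t := Term.Occurs.root t (by rw [he])

lemma substStep_inl {σ : Subst S} {t : Term S} {f ch} (he : PFunctor.M.dest t = ⟨Sum.inl f, ch⟩)
    (b : Bool) : substStep S σ (t, b) = ⟨Sum.inl f, fun i => (ch i, b)⟩ := by
  unfold substStep
  rw [he]

lemma substStep_false (σ : Subst S) (t : Term S) :
    substStep S σ (t, false) =
      ⟨(PFunctor.M.dest t).1, fun i => ((PFunctor.M.dest t).2 i, false)⟩ := by
  unfold substStep
  cases he : PFunctor.M.dest t with
  | mk l ch => cases l <;> rfl

lemma substStep_var_some {σ : Subst S} {t s : Term S} {x ch}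
    (he : PFunctor.M.dest t = ⟨Sum.inr x, ch⟩) (hs : σ.toFun x = some s) :
    substStep S σ (t, true) =
      ⟨(PFunctor.M.dest s).1, fun i => ((PFunctor.M.dest s).2 i, false)⟩ := by
  unfold substStep
  rw [he]
  show (match σ.toFun x with
    | some s =>
      match PFunctor.M.dest s with
      | ⟨l, ch'⟩ => (⟨l, fun i => (ch' i, false)⟩ : (TermP S).Obj (Term S × Bool))
    | none => ⟨Sum.inr x, fun i => (ch i, true)⟩) = _
  rw [hs]
  rfl

lemma substStep_var_none {σ : Subst S} {t : Term S} {x ch}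
    (he : PFunctor.M.dest t = ⟨Sum.inr x, ch⟩) (hs : σ.toFun x = none) :
    substStep S σ (t, true) = ⟨Sum.inr x, fun i => (ch i, true)⟩ := by
  unfold substStep
  rw [he]
  show (match σ.toFun x with
    | some s =>
      match PFunctor.M.dest s with
      | ⟨l, ch'⟩ => (⟨l, fun i => (ch' i, false)⟩ : (TermP S).Obj (Term S × Bool))
    | none => ⟨Sum.inr x, fun i => (ch i, true)⟩) = _
  rw [hs]

lemma subst_corec_false (σ : Subst S) (t : Term S) :
    PFunctor.M.corec (substStep S σ) (t, false) = t := by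
  apply PFunctor.M.bisim (fun u v => u = PFunctor.M.corec (substStep S σ) (v, false))
  · intro x y hxy
    refine ⟨(PFunctor.M.dest y).1,
      fun i => PFunctor.M.corec (substStep S σ) ((PFunctor.M.dest y).2 i, false),
      (PFunctor.M.dest y).2, ?_, rfl, fun i => rfl⟩
    rw [hxy, PFunctor.M.dest_corec]
    erw [substStep_false]
    rfl
  · rfl

lemma subst_dest_inl {σ : Subst S} {t : Term S} {f ch} (he : PFunctor.M.dest t = ⟨Sum.inl f, ch⟩) :
    Term.subst t σ = PFunctor.M.mk ⟨Sum.inl f, fun i => Term.subst (ch i) σ⟩ := by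
  rw [← PFunctor.M.mk_dest (Term.subst t σ)]
  congr 1
  rw [Term.subst, PFunctor.M.dest_corec, substStep_inl he]
  rfl

lemma subst_var_some {σ : Subst S} {t s : Term S} {x ch} (he : PFunctor.M.dest t = ⟨Sum.inr x, ch⟩)
    (hs : σ.toFun x = some s) : Term.subst t σ = s := by
  rw [← PFunctor.M.mk_dest (Term.subst t σ), ← PFunctor.M.mk_dest s]
  congr 1
  rw [Term.subst, PFunctor.M.dest_corec, substStep_var_some he hs]
  exact congrArg (Sigma.mk _) (funext fun i => subst_corec_false σ _)

lemma subst_var_none {σ : Subst S} {t : Term S} {x ch} (he : PFunctor.M.dest t = ⟨Sum.inr x, ch⟩)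
    (hs : σ.toFun x = none) : Term.subst t σ = t := by
  rw [← PFunctor.M.mk_dest (Term.subst t σ)]
  conv_rhs => rw [← PFunctor.M.mk_dest t]
  congr 1
  rw [Term.subst, PFunctor.M.dest_corec, substStep_var_none he hs, he]
  exact congrArg (Sigma.mk _) (funext fun i => i.elim0)

lemma not_occurs_subst {σ : Subst S} (hσ : σ.Ground) {y : ℕ} {u : Term S}
    (h : Term.Occurs S y u) :
    ∀ t : Term S, (∀ x, Term.Occurs S x t → (σ.toFun x).isSome) →
      u = Term.subst t σ → False := by
  induction h with
  | root u hr =>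
    intro t hv he
    cases hd : PFunctor.M.dest t with
    | mk l ch =>
      cases l with
      | inl f =>
        rw [he, subst_dest_inl hd] at hr
        erw [PFunctor.M.dest_mk] at hr
        exact Sum.inl_ne_inr (show (Sum.inl f : S.Func ⊕ ℕ) = Sum.inr y from hr)
      | inr x =>
        obtain ⟨s, hs⟩ := Option.isSome_iff_exists.mp (hv x (occurs_root' hd))
        have hus : u = s := he.trans (subst_var_some hd hs)
        exact hσ x s hs y (hus ▸ Term.Occurs.root u hr)
  | child u i hocc ih =>
    intro t hv he
    cases hd : PFunctor.M.dest t with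
    | mk l ch =>
      cases l with
      | inl f =>
        have hdu : PFunctor.M.dest u = ⟨Sum.inl f, fun j => Term.subst (ch j) σ⟩ := by
          rw [he, subst_dest_inl hd]
          erw [PFunctor.M.dest_mk]
        obtain ⟨j, hj⟩ := obj_index hdu i
        exact ih (ch j) (fun x hx => hv x (occurs_child' hd hx)) hj
      | inr x =>
        obtain ⟨s, hs⟩ := Option.isSome_iff_exists.mp (hv x (occurs_root' hd))
        have hus : u = s := he.trans (subst_var_some hd hs)
        exact hσ x s hs y (hus ▸ Term.Occurs.child u i hocc)

lemma subst_ground {σ : Subst S} (hσ : σ.Ground) {t : Term S}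
    (hv : ∀ x, Term.Occurs S x t → (σ.toFun x).isSome) : Term.Ground S (Term.subst t σ) :=
  fun _ h => not_occurs_subst hσ h t hv rfl

lemma occurs_subst {ρ : Subst S} {x y : ℕ} {s : Term S} {t : Term S}
    (h : Term.Occurs S x t) (hx : ρ.toFun x = some s) (hy : Term.Occurs S y s) :
    Term.Occurs S y (Term.subst t ρ) := by
  induction h with
  | root t hr =>
    cases hd : PFunctor.M.dest t with
    | mk l ch =>
      rw [hd] at hr
      subst hr
      rw [subst_var_some hd hx]
      exact hy
  | child t i hocc ih =>
    cases hd : PFunctor.M.dest t with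
    | mk l ch =>
      cases l with
      | inl f =>
        obtain ⟨j, hj⟩ := obj_index hd i
        have hds : PFunctor.M.dest (Term.subst t ρ) =
            ⟨Sum.inl f, fun i => Term.subst (ch i) ρ⟩ := by
          rw [subst_dest_inl hd]
          erw [PFunctor.M.dest_mk]
        exact occurs_child' hds (i := j) (hj ▸ ih)
      | inr x' =>
        obtain ⟨j, _⟩ := obj_index hd i
        exact j.elim0

lemma isFinite_child {t : Term S} (h : Term.IsFinite S t) {l ch}
    (he : PFunctor.M.dest t = ⟨l, ch⟩) (i : (TermP S).B l) : Term.IsFinite S (ch i) := by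
  cases h with
  | mk t h =>
    rw [he] at h
    exact h i

def Subst.comp (ρ σ : Subst S) : Subst S where
  toFun x := (ρ.toFun x).bind fun s =>
    match (PFunctor.M.dest s).1 with
    | Sum.inr y => σ.toFun y
    | Sum.inl _ => none
  finDom := ρ.finDom.subset fun x hx => by
    simp only [Set.mem_setOf_eq] at hx ⊢
    cases h : ρ.toFun x with
    | none => rw [h] at hx; simp at hx
    | some s => simp

lemma comp_var {ρ σ : Subst S} {x y : ℕ} (h : ρ.toFun x = some (Term.var S y)) :
    (Subst.comp ρ σ).toFun x = σ.toFun y := by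
  simp only [Subst.comp, h, Option.bind_some]
  rfl

lemma comp_ground {ρ σ : Subst S} (hσ : σ.Ground) : (Subst.comp ρ σ).Ground := by
  intro x t ht
  simp only [Subst.comp] at ht
  cases h : ρ.toFun x with
  | none => rw [h] at ht; simp at ht
  | some s =>
    rw [h] at ht
    simp only [Option.bind_some] at ht
    cases hl : (PFunctor.M.dest s).1 with
    | inl f => rw [hl] at ht; simp at ht
    | inr y => rw [hl] at ht; exact hσ y t ht

lemma subst_comp (ρ σ : Subst S) :
    ∀ t : Term S, Term.IsFinite S t →
      (∀ x, Term.Occurs S x t → ∃ y, ρ.toFun x = some (Term.var S y) ∧ (σ.toFun y).isSome) →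
      Term.subst (Term.subst t ρ) σ = Term.subst t (Subst.comp ρ σ) := by
  intro t hfin
  induction hfin with
  | mk t hch ih =>
    intro hv
    cases hd : PFunctor.M.dest t with
    | mk l ch =>
      cases l with
      | inl f =>
        rw [hd] at ih
        have h1 : PFunctor.M.dest (Term.subst t ρ) =
            ⟨Sum.inl f, fun i => Term.subst (ch i) ρ⟩ := by
          rw [subst_dest_inl hd]
          erw [PFunctor.M.dest_mk]
        rw [subst_dest_inl h1, subst_dest_inl hd]
        congr 1
        exact congrArg (Sigma.mk _)
          (funext fun i => ih i (fun x hx => hv x (occurs_child' hd hx)))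
      | inr x =>
        obtain ⟨y, hy, hys⟩ := hv x (occurs_root' hd)
        obtain ⟨s, hs⟩ := Option.isSome_iff_exists.mp hys
        have h2 : PFunctor.M.dest (Term.var S y) =
            ⟨Sum.inr y, fun i => i.elim0⟩ := rfl
        rw [subst_var_some hd hy, subst_var_some h2 hs,
          subst_var_some hd (show (Subst.comp ρ σ).toFun x = some s from (comp_var hy).trans hs)]

lemma atom_subst_eq {A B : Atom S} (σ : Subst S) (h : A.pred = B.pred)
    (hargs : ∀ i, Term.subst (A.args i) σ =
      Term.subst (B.args (Fin.cast (congrArg S.par h) i)) σ) :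
    Atom.subst A σ = Atom.subst B σ := by
  obtain ⟨p, a⟩ := A
  obtain ⟨q, b⟩ := B
  dsimp at h
  subst h
  exact congrArg (fun f => Atom.mk p f) (funext fun i => by simpa [Fin.cast] using hargs i)

lemma sol_mono {E F : Set (Eqn S)} (h : E ⊆ F) : sol F ⊆ sol E := by
  rintro σ ⟨hg, hd, hs⟩
  exact ⟨hg, fun x hx => hd (by obtain ⟨e, he, ho⟩ := hx; exact ⟨e, h he, ho⟩),
    fun e he => hs e (h he)⟩

lemma loopind_ind {P coP : Set (Clause S)} {H : Set (Atom S)} {A : Atom S}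
    (h : LoopInd P coP H A) : A ∈ Ind (P ∪ coP) := by
  induction h with
  | hp _ hA => exact hA
  | rule r hr h1 _ ih =>
    refine Set.mem_sInter.mpr fun I hI => ?_
    have hrI : r ∈ GroundInst (P ∪ coP) := by
      obtain ⟨C, hC, rest⟩ := hr
      exact ⟨C, Set.mem_union_left _ hC, rest⟩
    exact hI ⟨r, hrI, h1, fun B hB => Set.mem_sInter.mp (ih B hB) I hI⟩

lemma loopind_reg {P coP : Set (Clause S)} {H : Set (Atom S)} {A : Atom S}
    (h : LoopInd P coP H A) :
    ∃ I : Set (Atom S), I.Finite ∧ (A ∈ I ∨ A ∈ H) ∧ I ⊆ Ind (P ∪ coP) ∧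
      ∀ B ∈ I, ∃ r ∈ GroundInst P, r.1 = B ∧ ∀ Cc ∈ r.2, Cc ∈ I ∪ H := by
  induction h with
  | hp hA hInd => exact ⟨∅, Set.finite_empty, Or.inr hA, Set.empty_subset _, by simp⟩
  | @rule H A r hr h1 hprem ih =>
    choose! I hfin hmem hind hclo using ih
    refine ⟨insert A (⋃ B ∈ {b | b ∈ r.2}, I B), ?_, Or.inl (Set.mem_insert _ _), ?_, ?_⟩
    · exact Set.Finite.insert _ ((List.finite_toSet r.2).biUnion fun B hB => hfin B hB)
    · intro B hB
      rcases Set.mem_insert_iff.mp hB with rfl | hB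
      · exact loopind_ind (LoopInd.rule r hr h1 hprem)
      · obtain ⟨B', hB', hBB⟩ := Set.mem_iUnion₂.mp hB
        exact hind B' hB' hBB
    · intro B hB
      rcases Set.mem_insert_iff.mp hB with rfl | hB
      · refine ⟨r, hr, h1, fun Cc hCc => ?_⟩
        rcases hmem Cc hCc with hI | hH
        · exact Or.inl (Set.mem_insert_iff.mpr (Or.inr (Set.mem_biUnion hCc hI)))
        · rcases hH with hH | rfl
          · exact Or.inr hH
          · exact Or.inl (Set.mem_insert _ _)
      · obtain ⟨B₀, hB₀, hBI⟩ := Set.mem_iUnion₂.mp hB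
        obtain ⟨r', hr', h1', hclo'⟩ := hclo B₀ hB₀ B hBI
        refine ⟨r', hr', h1', fun Cc hCc => ?_⟩
        rcases hclo' Cc hCc with hI | hH
        · exact Or.inl (Set.mem_insert_iff.mpr (Or.inr (Set.mem_biUnion hB₀ hI)))
        · rcases hH with hH | rfl
          · exact Or.inr hH
          · exact Or.inl (Set.mem_insert _ _)

lemma loopind_flexreg {P coP : Set (Clause S)} {A : Atom S}
    (h : LoopInd P coP ∅ A) : A ∈ FlexReg P coP := by
  obtain ⟨I, hfin, hmem, hind, hclo⟩ := loopind_reg h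
  have hA : A ∈ I := hmem.resolve_right fun hx => hx
  refine Set.mem_sUnion.mpr ⟨I, ⟨hfin, ?_, hind⟩, hA⟩
  intro B hB
  obtain ⟨r, hr, h1, h2⟩ := hclo B hB
  exact ⟨r, hr, h1, fun Cc hCc => (h2 Cc hCc).resolve_right fun hx => hx⟩

lemma opsem_sound {P coP : Set (Clause S)} {H : Set (Atom S)} {G : List (Atom S)}
    {E E' : Set (Eqn S)} (h : OpSem S P coP H G E E') :
    ∀ σ ∈ sol E', σ ∈ sol E ∧ goalVars G ⊆ σ.dom ∧
      ∀ A ∈ G, LoopInd P coP ((fun B => Atom.subst B σ) '' H) (Atom.subst A σ) := by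
  induction h with
  | empty P coP H E =>
    intro σ hσ
    refine ⟨hσ, ?_, by simp⟩
    rintro x ⟨A, hA, -⟩
    exact absurd hA List.not_mem_nil
  | @cohyp P coP H G1 G2 A B E1 E2 E3 hne hBH hpred hsolv h1 h2 ih1 ih2 =>
    intro σ hσ3
    obtain ⟨hσ2, hgv2, hloop2⟩ := ih2 σ hσ3
    obtain ⟨hσeqs, -, hloop1⟩ := ih1 σ hσ2
    have hσ1 : σ ∈ sol E1 := sol_mono Set.subset_union_left hσeqs
    have hAdom : ∀ x, Atom.Occurs x A → x ∈ σ.dom := by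
      rintro x ⟨i, hocc⟩
      exact hσeqs.2.1 ⟨(A.args i, B.args (Fin.cast (congrArg S.par hpred) i)),
        Set.mem_union_right _ ⟨hpred, i, rfl⟩, Or.inl hocc⟩
    have hAB : Atom.subst A σ = Atom.subst B σ :=
      atom_subst_eq σ hpred fun i => hσeqs.2.2 _ (Set.mem_union_right _ ⟨hpred, i, rfl⟩)
    have hAInd : Atom.subst A σ ∈ Ind (P ∪ coP) := by
      have := loopind_ind (hloop1 A (by simp))
      rwa [Set.union_empty] at this
    have hALoop : LoopInd P coP ((fun B => Atom.subst B σ) '' H) (Atom.subst A σ) :=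
      LoopInd.hp (by rw [hAB]; exact ⟨B, hBH, rfl⟩) hAInd
    refine ⟨hσ1, ?_, ?_⟩
    · rintro x ⟨A', hA', hocc⟩
      rcases List.mem_append.mp hA' with hA' | hA'
      · exact hgv2 ⟨A', List.mem_append.mpr (Or.inl hA'), hocc⟩
      · rcases List.mem_cons.mp hA' with rfl | hA'
        · exact hAdom x hocc
        · exact hgv2 ⟨A', List.mem_append.mpr (Or.inr hA'), hocc⟩
    · intro A' hA'
      rcases List.mem_append.mp hA' with hA' | hA'
      · exact hloop2 A' (List.mem_append.mpr (Or.inl hA'))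
      · rcases List.mem_cons.mp hA' with rfl | hA'
        · exact hALoop
        · exact hloop2 A' (List.mem_append.mpr (Or.inr hA'))
  | @step P coP H G1 G2 A E1 E2 E3 C ρ hCP hfresh hpred hsolv h1 h2 ih1 ih2 =>
    intro σ hσ3
    obtain ⟨hσ2, hgv2, hloop2⟩ := ih2 σ hσ3
    obtain ⟨hσeqs, hgv1, hloop1⟩ := ih1 σ hσ2
    have hσ1 : σ ∈ sol E1 := sol_mono Set.subset_union_left hσeqs
    have hpred' : A.pred = (Atom.subst C.head ρ).pred := hpred
    have hAdom : ∀ x, Atom.Occurs x A → x ∈ σ.dom := by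
      rintro x ⟨i, hocc⟩
      exact hσeqs.2.1 ⟨(A.args i,
        (Atom.subst C.head ρ).args (Fin.cast (congrArg S.par hpred') i)),
        Set.mem_union_right _ ⟨hpred', i, rfl⟩, Or.inl hocc⟩
    have hkey : ∀ x, x ∈ clauseVars C →
        ∃ y, ρ.toFun x = some (Term.var S y) ∧ (σ.toFun y).isSome := by
      intro x hx
      obtain ⟨t0, ht0⟩ := Option.isSome_iff_exists.mp (hfresh.2.1 hx)
      obtain ⟨y, rfl, -⟩ := hfresh.1 x t0 ht0
      refine ⟨y, ht0, ?_⟩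
      have hyvar : Term.Occurs S y (Term.var S y) := Term.Occurs.root _ rfl
      rcases hx with ⟨i, hocc⟩ | ⟨Bb, hBb, i, hocc⟩
      · have hyocc : Term.Occurs S y (Term.subst (C.head.args i) ρ) :=
          occurs_subst hocc ht0 hyvar
        set j : Fin (S.par A.pred) := Fin.cast (congrArg S.par hpred').symm i with hj
        have hcast : Fin.cast (congrArg S.par hpred') j = i := by
          apply Fin.ext; rfl
        refine hσeqs.2.1 ⟨(A.args j,
          (Atom.subst C.head ρ).args (Fin.cast (congrArg S.par hpred') j)),
          Set.mem_union_right _ ⟨hpred', j, rfl⟩, Or.inr ?_⟩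
        rw [hcast]
        exact hyocc
      · have hyocc : Term.Occurs S y (Term.subst (Bb.args i) ρ) :=
          occurs_subst hocc ht0 hyvar
        exact hgv1 ⟨Atom.subst Bb ρ, List.mem_map.mpr ⟨Bb, hBb, rfl⟩, ⟨i, hyocc⟩⟩
    have hτvar : ∀ x, x ∈ clauseVars C → ((Subst.comp ρ σ).toFun x).isSome := by
      intro x hx
      obtain ⟨y, hy, hys⟩ := hkey x hx
      rw [comp_var hy]
      exact hys
    have hcompsub : ∀ t : Term S, Term.IsFinite S t →
        (∀ x, Term.Occurs S x t → x ∈ clauseVars C) →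
        Term.subst (Term.subst t ρ) σ = Term.subst t (Subst.comp ρ σ) := fun t hf hv =>
      subst_comp ρ σ t hf fun x hx => hkey x (hv x hx)
    have hheadeq : Atom.subst (Atom.subst C.head ρ) σ = Atom.subst C.head (Subst.comp ρ σ) :=
      congrArg (fun f => Atom.mk C.head.pred f)
        (funext fun i => hcompsub _ (C.finHead i) fun x hx => Or.inl ⟨i, hx⟩)
    have hAeq : Atom.subst A σ = Atom.subst C.head (Subst.comp ρ σ) := by
      rw [← hheadeq]
      exact atom_subst_eq σ hpred' fun i =>
        hσeqs.2.2 _ (Set.mem_union_right _ ⟨hpred', i, rfl⟩)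
    have hGI : (Atom.subst C.head (Subst.comp ρ σ),
        C.body.map fun B => Atom.subst B (Subst.comp ρ σ)) ∈ GroundInst P := by
      refine ⟨C, hCP, Subst.comp ρ σ, comp_ground hσeqs.1, rfl, rfl, ?_, ?_⟩
      · intro i
        exact subst_ground (comp_ground hσeqs.1) fun x hx => hτvar x (Or.inl ⟨i, hx⟩)
      · intro B hB
        obtain ⟨B0, hB0, rfl⟩ := List.mem_map.mp hB
        intro i
        exact subst_ground (comp_ground hσeqs.1) fun x hx => hτvar x (Or.inr ⟨B0, hB0, i, hx⟩)
    have hALoop : LoopInd P coP ((fun B => Atom.subst B σ) '' H) (Atom.subst A σ) := by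
      refine LoopInd.rule _ hGI hAeq.symm ?_
      intro B' hB'
      obtain ⟨B0, hB0, rfl⟩ := List.mem_map.mp hB'
      have hbody : Atom.subst (Atom.subst B0 ρ) σ = Atom.subst B0 (Subst.comp ρ σ) :=
        congrArg (fun f => Atom.mk B0.pred f)
          (funext fun i => hcompsub _ (C.finBody B0 hB0 i) fun x hx => Or.inr ⟨B0, hB0, i, hx⟩)
      have hl := hloop1 (Atom.subst B0 ρ) (List.mem_map.mpr ⟨B0, hB0, rfl⟩)
      rw [Set.image_union, Set.image_singleton] at hl
      exact hbody ▸ hl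
    refine ⟨hσ1, ?_, ?_⟩
    · rintro x ⟨A', hA', hocc⟩
      rcases List.mem_append.mp hA' with hA' | hA'
      · exact hgv2 ⟨A', List.mem_append.mpr (Or.inl hA'), hocc⟩
      · rcases List.mem_cons.mp hA' with rfl | hA'
        · exact hAdom x hocc
        · exact hgv2 ⟨A', List.mem_append.mpr (Or.inr hA'), hocc⟩
    · intro A' hA'
      rcases List.mem_append.mp hA' with hA' | hA'
      · exact hloop2 A' (List.mem_append.mpr (Or.inl hA'))
      · rcases List.mem_cons.mp hA' with rfl | hA'
        · exact hALoop
        · exact hloop2 A' (List.mem_append.mpr (Or.inr hA'))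

/-- Soundness of flexible coSLD resolution w.r.t. the regular declarative semantics. -/
theorem soundness_wrt_regular_declarative_semantics (S : Sig) (P coP : Set (Clause S))
    (hP : P.Finite) (hcoP : coP.Finite)
    (G : List (Atom S)) (hG : ∀ A ∈ G, A.IsFinite)
    (E E' : Set (Eqn S)) (hE : EqnSetFin E) (hE' : EqnSetFin E')
    (h : OpSem S P coP ∅ G E E')
    (σ : Subst S) (hσ : σ ∈ sol E') :
    σ ∈ Ans G E (FlexReg P coP) := by
  obtain ⟨hsolE, hgv, hloop⟩ := opsem_sound h σ hσ
  refine ⟨hsolE, hgv, fun A hA => ?_⟩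
  have := hloop A hA
  rw [Set.image_empty] at this
  exact loopind_flexreg this

end FlexLP
end

section
/- Correctness of the inductive characterization of the regular declarative semantics: for every logic program with coclauses (P,coP) and every ground atom A, the judgment (∅ ⊢ A) belongs to the inductive interpretation of the inference system Loop(P,coP) if and only if A ∈ FlexReg(P,coP). -/
/- Framework: flexible coinductive logic programming (logic programs with coclauses).
   Terms are possibly infinite trees, modelled as M-types of a polynomial functor. -/

namespace FlexLP

/-- `TP` is monotone. -/
theorem TP_mono {S : Sig} (P : Set (Clause S)) {I J : Set (Atom S)} (h : I ⊆ J) :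
    TP P I ⊆ TP P J := by
  rintro A ⟨r, hr, h1, h2⟩
  exact ⟨r, hr, h1, fun B hB => h (h2 B hB)⟩

theorem GroundInst_mono {S : Sig} {P Q : Set (Clause S)} (h : P ⊆ Q) :
    GroundInst P ⊆ GroundInst Q := by
  rintro r ⟨C, hC, σ, hσ⟩
  exact ⟨C, h hC, σ, hσ⟩

theorem Ind_subset {S : Sig} {Q : Set (Clause S)} {I : Set (Atom S)} (hI : IsModel Q I) :
    Ind Q ⊆ I := fun A hA => hA I hI

theorem Ind_isModel {S : Sig} (Q : Set (Clause S)) : IsModel Q (Ind Q) := by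
  intro A hA I hI
  exact hI (TP_mono Q (Ind_subset hI) hA)

/-- Soundness: a `Loop` derivation of `H ⊢ A` yields `A ∈ Ind (P ∪ coP)` together with a
finite "comodel relative to `H`" containing `A` (up to `H`). -/
theorem loop_sound {S : Sig} {P coP : Set (Clause S)} {H : Set (Atom S)} {A : Atom S}
    (h : LoopInd P coP H A) :
    A ∈ Ind (P ∪ coP) ∧ ∃ I : Set (Atom S), I.Finite ∧ A ∈ I ∪ H ∧
      I ⊆ TP P (I ∪ H) ∧ I ⊆ Ind (P ∪ coP) := by
  induction h with
  | hp hAH hAInd =>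
      exact ⟨hAInd, ∅, Set.finite_empty, Or.inr hAH, by simp, by simp⟩
  | @rule H A r hr hr1 hprem IH =>
      choose hInd f hfin hmem hTP hIsub using IH
      classical
      set g : Atom S → Set (Atom S) := fun B => if hB : B ∈ r.2 then f B hB else ∅ with hg
      set I : Set (Atom S) := {A} ∪ ⋃ B ∈ {x | x ∈ r.2}, g B with hI
      have hAInd : A ∈ Ind (P ∪ coP) :=
        Ind_isModel (P ∪ coP)
          ⟨r, GroundInst_mono Set.subset_union_left hr, hr1, fun B hB => hInd B hB⟩
      have hgsub : ∀ B, g B ⊆ I := by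
        intro B C hC
        by_cases hB : B ∈ r.2
        · exact Or.inr (Set.mem_biUnion hB hC)
        · rw [hg] at hC; simp [hB] at hC
      have hsubIH : ∀ (B : Atom S) (hB : B ∈ r.2), f B hB ∪ (H ∪ {A}) ⊆ I ∪ H := by
        intro B hB C hC
        rcases hC with hC | hC | hC
        · refine Or.inl (hgsub B ?_)
          rw [hg]; simpa [hB] using hC
        · exact Or.inr hC
        · exact Or.inl (Or.inl hC)
      refine ⟨hAInd, I, ?_, Or.inl (Or.inl rfl), ?_, ?_⟩
      · refine Set.Finite.union (Set.finite_singleton A) ?_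
        refine Set.Finite.biUnion (List.finite_toSet r.2) ?_
        intro B hB
        simp only [Set.mem_setOf_eq] at hB
        rw [hg]; simpa [hB] using hfin B hB
      · rintro C (rfl | hC)
        · exact ⟨r, hr, hr1, fun B hB => hsubIH B hB (hmem B hB)⟩
        · rcases Set.mem_iUnion₂.mp hC with ⟨B, hB, hCB⟩
          simp only [Set.mem_setOf_eq] at hB
          rw [hg] at hCB; simp only [hB, dif_pos] at hCB
          exact TP_mono P (hsubIH B hB) (hTP B hB hCB)
      · rintro C (rfl | hC)
        · exact hAInd
        · rcases Set.mem_iUnion₂.mp hC with ⟨B, hB, hCB⟩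
          simp only [Set.mem_setOf_eq] at hB
          rw [hg] at hCB; simp only [hB, dif_pos] at hCB
          exact hIsub B hB hCB

/-- Completeness: every element of a finite comodel of `P` included in `Ind (P ∪ coP)`
is derivable in `Loop (P, coP)` under any set of hypotheses. -/
theorem loop_complete {S : Sig} {P coP : Set (Clause S)} {I : Set (Atom S)}
    (hIfin : I.Finite) (hco : IsComodel P I) (hsub : I ⊆ Ind (P ∪ coP)) :
    ∀ (n : ℕ) (H : Set (Atom S)) (B : Atom S), B ∈ I → (I \ H).ncard ≤ n →
      LoopInd P coP H B := by
  intro n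
  induction n with
  | zero =>
      intro H B hB hn
      have hBH : B ∈ H := by
        by_contra hBH
        have hne : B ∈ I \ H := ⟨hB, hBH⟩
        have : I \ H = ∅ := (Set.ncard_eq_zero hIfin.diff).mp (Nat.le_zero.mp hn)
        simp [this] at hne
      exact LoopInd.hp hBH (hsub hB)
  | succ n IH =>
      intro H B hB hn
      by_cases hBH : B ∈ H
      · exact LoopInd.hp hBH (hsub hB)
      · obtain ⟨r, hr, hr1, hprem⟩ := hco hB
        refine LoopInd.rule r hr hr1 ?_
        intro C hC
        refine IH (H ∪ {B}) C (hprem C hC) ?_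
        have heq : I \ (H ∪ {B}) = (I \ H) \ {B} := Set.diff_diff.symm
        have hlt : ((I \ H) \ {B}).ncard < (I \ H).ncard :=
          Set.ncard_diff_singleton_lt_of_mem ⟨hB, hBH⟩ hIfin.diff
        rw [heq]
        omega

/-- Correctness of the inductive characterization of the regular declarative semantics:
`∅ ⊢ A` is derivable in `Loop(P,coP)` iff `A ∈ FlexReg(P,coP)`. -/
theorem loop_characterizes_regular_semantics (S : Sig) (P coP : Set (Clause S))
    (hP : P.Finite) (hcoP : coP.Finite)
    (A : Atom S) (hA : A.Ground) :
    LoopInd P coP ∅ A ↔ A ∈ FlexReg P coP := by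
  constructor
  · intro h
    obtain ⟨hAInd, I, hfin, hmem, hTP, hIsub⟩ := loop_sound h
    rw [Set.union_empty] at hmem hTP
    exact ⟨I, ⟨hfin, hTP, hIsub⟩, hmem⟩
  · rintro ⟨I, ⟨hfin, hco, hsub⟩, hAI⟩
    exact loop_complete hfin hco hsub (I \ ∅).ncard ∅ A hAI le_rfl


end FlexLP
end
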